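/- For every real number k ≥ 1 and all mass functions m1, m2, m3 on Ω, Σ_{A⊆Ω} |pl_{m1 ⊚∪ m3}(A) − pl_{m2 ⊚∪ m3}(A)|^k ≤ Σ_{A⊆Ω} |pl_{m1}(A) − pl_{m2}(A)|^k. Consequently the L_k norm based distance between plausibility functions is 1-Lipschitz with respect to disjunctive combination with a fixed mass function. -/
import Mathlib


open Finset

/-- A mass function on a finite frame `Ω`: nonnegative and sums to one over all subsets. -/
def IsMass {Ω : Type*} [Fintype Ω] (m : Finset Ω → ℝ) : Prop :=
  (∀ A, 0 ≤ m A) ∧ ∑ A : Finset Ω, m A = 1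

/-- Commonality (inclusion functional): `q m A = ∑_{E ⊇ A} m E`. -/
def commonality {Ω : Type*} [Fintype Ω] [DecidableEq Ω] (m : Finset Ω → ℝ) (A : Finset Ω) : ℝ :=
  ∑ E : Finset Ω, if A ⊆ E then m E else 0

/-- Plausibility (hitting functional): `pl m A = ∑_{E ∩ A ≠ ∅} m E`. -/
def plaus {Ω : Type*} [Fintype Ω] [DecidableEq Ω] (m : Finset Ω → ℝ) (A : Finset Ω) : ℝ :=
  ∑ E : Finset Ω, if E ∩ A ≠ ∅ then m E else 0

/-- Implicability: `b m A = ∑_{E ⊆ A} m E`. -/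
def implic {Ω : Type*} [Fintype Ω] [DecidableEq Ω] (m : Finset Ω → ℝ) (A : Finset Ω) : ℝ :=
  ∑ E : Finset Ω, if E ⊆ A then m E else 0

/-- Conjunctive combination: `(m1 ⊚∩ m2)(E) = ∑_{A ∩ B = E} m1 A * m2 B`. -/
def conjC {Ω : Type*} [Fintype Ω] [DecidableEq Ω] (m1 m2 : Finset Ω → ℝ) (E : Finset Ω) : ℝ :=
  ∑ A : Finset Ω, ∑ B : Finset Ω, if A ∩ B = E then m1 A * m2 B else 0

/-- Disjunctive combination: `(m1 ⊚∪ m2)(E) = ∑_{A ∪ B = E} m1 A * m2 B`. -/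
def disjC {Ω : Type*} [Fintype Ω] [DecidableEq Ω] (m1 m2 : Finset Ω → ℝ) (E : Finset Ω) : ℝ :=
  ∑ A : Finset Ω, ∑ B : Finset Ω, if A ∪ B = E then m1 A * m2 B else 0

/-- Categorical mass function `m_A`. -/
def categorical {Ω : Type*} [Fintype Ω] [DecidableEq Ω] (A : Finset Ω) : Finset Ω → ℝ :=
  fun E => if E = A then 1 else 0

lemma plaus_add_implic {Ω : Type*} [Fintype Ω] [DecidableEq Ω] (m : Finset Ω → ℝ)
    (A : Finset Ω) : plaus m A = (∑ E : Finset Ω, m E) - implic m Aᶜ := by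
  unfold plaus implic
  rw [eq_sub_iff_add_eq, ← Finset.sum_add_distrib]
  refine Finset.sum_congr rfl fun E _ => ?_
  have h : E ∩ A = ∅ ↔ E ⊆ Aᶜ := by
    rw [← Finset.disjoint_iff_inter_eq_empty, ← Finset.le_iff_subset]
    exact le_compl_iff_disjoint_right.symm
  by_cases hc : E ∩ A = ∅
  · simp [hc, h.mp hc]
  · have hs : ¬ E ⊆ Aᶜ := fun hs => hc (h.mpr hs)
    simp [hc, hs]

lemma sum_disjC {Ω : Type*} [Fintype Ω] [DecidableEq Ω] (m1 m3 : Finset Ω → ℝ) :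
    ∑ E : Finset Ω, disjC m1 m3 E = (∑ B : Finset Ω, m1 B) * (∑ C : Finset Ω, m3 C) := by
  unfold disjC
  rw [Finset.sum_mul_sum]
  rw [Finset.sum_comm]
  refine Finset.sum_congr rfl fun B _ => ?_
  rw [Finset.sum_comm]
  refine Finset.sum_congr rfl fun C _ => ?_
  simp

lemma implic_disjC {Ω : Type*} [Fintype Ω] [DecidableEq Ω] (m1 m3 : Finset Ω → ℝ)
    (A : Finset Ω) : implic (disjC m1 m3) A = implic m1 A * implic m3 A := by
  unfold implic disjC
  rw [Finset.sum_mul_sum]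
  have L : ∀ E : Finset Ω,
      (if E ⊆ A then (∑ B : Finset Ω, ∑ C : Finset Ω,
        if B ∪ C = E then m1 B * m3 C else 0) else 0)
      = ∑ B : Finset Ω, ∑ C : Finset Ω,
        if B ∪ C = E ∧ E ⊆ A then m1 B * m3 C else 0 := by
    intro E
    by_cases hE : E ⊆ A <;> simp [hE]
  simp only [L]
  rw [Finset.sum_comm]
  refine Finset.sum_congr rfl fun B _ => ?_
  rw [Finset.sum_comm]
  refine Finset.sum_congr rfl fun C _ => ?_
  simp only [ite_and]
  rw [Finset.sum_ite_eq Finset.univ (B ∪ C)]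
  simp [Finset.union_subset_iff, ite_and, mul_ite]
  split_ifs <;> simp_all

lemma implic_nonneg {Ω : Type*} [Fintype Ω] [DecidableEq Ω] {m : Finset Ω → ℝ}
    (h : IsMass m) (A : Finset Ω) : 0 ≤ implic m A :=
  Finset.sum_nonneg fun E _ => by by_cases hE : E ⊆ A <;> simp [implic, hE, h.1 E]

lemma implic_le_one {Ω : Type*} [Fintype Ω] [DecidableEq Ω] {m : Finset Ω → ℝ}
    (h : IsMass m) (A : Finset Ω) : implic m A ≤ 1 := by
  rw [← h.2]
  refine Finset.sum_le_sum fun E _ => ?_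
  by_cases hE : E ⊆ A <;> simp [implic, hE, h.1 E]

/-- For every real `k ≥ 1` and mass functions `m1, m2, m3`,
`∑_{A⊆Ω} |pl_{m1 ⊚∪ m3}(A) − pl_{m2 ⊚∪ m3}(A)|^k ≤ ∑_{A⊆Ω} |pl_{m1}(A) − pl_{m2}(A)|^k`,
i.e. the `L_k` distance between plausibilities is 1-Lipschitz w.r.t. disjunctive
combination with a fixed mass function. -/
theorem lk_plaus_disj_nonexpansive {Ω : Type*} [Fintype Ω] [DecidableEq Ω]
    (k : ℝ) (hk : 1 ≤ k) (m1 m2 m3 : Finset Ω → ℝ)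
    (h1 : IsMass m1) (h2 : IsMass m2) (h3 : IsMass m3) :
    ∑ A : Finset Ω, |plaus (disjC m1 m3) A - plaus (disjC m2 m3) A| ^ k ≤
      ∑ A : Finset Ω, |plaus m1 A - plaus m2 A| ^ k := by
  refine Finset.sum_le_sum fun A _ => ?_
  have hd1 : IsMass (disjC m1 m3) := by
    constructor
    · intro E
      exact Finset.sum_nonneg fun B _ => Finset.sum_nonneg fun C _ => by
        by_cases h : B ∪ C = E <;>
          simp [disjC, h, mul_nonneg (h1.1 B) (h3.1 C)]
    · rw [sum_disjC, h1.2, h3.2, mul_one]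
  have hd2 : IsMass (disjC m2 m3) := by
    constructor
    · intro E
      exact Finset.sum_nonneg fun B _ => Finset.sum_nonneg fun C _ => by
        by_cases h : B ∪ C = E <;>
          simp [disjC, h, mul_nonneg (h2.1 B) (h3.1 C)]
    · rw [sum_disjC, h2.2, h3.2, mul_one]
  have key : |plaus (disjC m1 m3) A - plaus (disjC m2 m3) A| ≤ |plaus m1 A - plaus m2 A| := by
    rw [plaus_add_implic (disjC m1 m3), plaus_add_implic (disjC m2 m3),
      plaus_add_implic m1, plaus_add_implic m2, hd1.2, hd2.2, h1.2, h2.2,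
      implic_disjC, implic_disjC]
    have : (1 - implic m1 Aᶜ * implic m3 Aᶜ) - (1 - implic m2 Aᶜ * implic m3 Aᶜ)
        = (implic m2 Aᶜ - implic m1 Aᶜ) * implic m3 Aᶜ := by ring
    rw [this, abs_mul, abs_of_nonneg (implic_nonneg h3 Aᶜ)]
    have h' : |(1 : ℝ) - implic m1 Aᶜ - (1 - implic m2 Aᶜ)| = |implic m2 Aᶜ - implic m1 Aᶜ| := by
      rw [show (1 : ℝ) - implic m1 Aᶜ - (1 - implic m2 Aᶜ) = implic m2 Aᶜ - implic m1 Aᶜ by ring]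
    rw [h']
    calc |implic m2 Aᶜ - implic m1 Aᶜ| * implic m3 Aᶜ
        ≤ |implic m2 Aᶜ - implic m1 Aᶜ| * 1 :=
          mul_le_mul_of_nonneg_left (implic_le_one h3 Aᶜ) (abs_nonneg _)
      _ = |implic m2 Aᶜ - implic m1 Aᶜ| := mul_one _
  exact Real.rpow_le_rpow (abs_nonneg _) key (le_trans zero_le_one hk)
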